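/- Let F be a convex subset of a Hausdorff locally convex topological vector space X with 0 ∈ int(F), and let Ω be a nonempty convex subset of X. Suppose x̄ ∉ cl_F(Ω) and set r := T_Ω^F(x̄) > 0. Then ∂T_Ω^F(x̄) = N(x̄; Ω_r) ∩ S*, where Ω_r := {x | T_Ω^F(x) ≤ r} and S* := {x* ∈ X* | σ_F(−x*) = 1}. -/

import Mathlib

open Set Filter Topology Pointwise

variable {X : Type*} [AddCommGroup X] [Module ℝ X] [TopologicalSpace X]
  [IsTopologicalAddGroup X] [ContinuousSMul ℝ X] [T2Space X] [LocallyConvexSpace ℝ X]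

/-- The set of admissible times in the definition of the minimal time function. -/
def timeSet (F Ω : Set X) (x : X) : Set ℝ := {t : ℝ | 0 < t ∧ ∃ f ∈ F, x + t • f ∈ Ω}

/-- The minimal time function with target Ω and constant dynamics F. -/
noncomputable def minTime (F Ω : Set X) (x : X) : ℝ := sInf (timeSet F Ω x)

/-- The convex subdifferential of the minimal time function at a point. -/
def subdiffMinTime (F Ω : Set X) (x₀ : X) : Set (X →L[ℝ] ℝ) :=
  {p : X →L[ℝ] ℝ | ∀ x : X, p (x - x₀) ≤ minTime F Ω x - minTime F Ω x₀}

/-- The normal cone to a set A at x₀. -/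
def normalCone (A : Set X) (x₀ : X) : Set (X →L[ℝ] ℝ) :=
  {p : X →L[ℝ] ℝ | ∀ x ∈ A, p (x - x₀) ≤ 0}

lemma timeSet_bddBelow (F Ω : Set X) (x : X) : BddBelow (timeSet F Ω x) :=
  ⟨0, fun t ht => ht.1.le⟩

lemma timeSet_nonempty {F Ω : Set X} (h0 : (0 : X) ∈ interior F) (hΩne : Ω.Nonempty)
    (x : X) : (timeSet F Ω x).Nonempty := by
  obtain ⟨ω, hω⟩ := hΩne
  have hF : interior F ∈ 𝓝 (0 : X) := isOpen_interior.mem_nhds h0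
  have htend : Filter.Tendsto (fun t : ℝ => t⁻¹ • (ω - x)) Filter.atTop (𝓝 (0 : X)) := by
    have h1 : Filter.Tendsto (fun t : ℝ => t⁻¹) Filter.atTop (𝓝 (0 : ℝ)) :=
      tendsto_inv_atTop_zero
    simpa using h1.smul_const (ω - x)
  have hev : ∀ᶠ t in Filter.atTop, t⁻¹ • (ω - x) ∈ interior F := htend.eventually_mem hF
  obtain ⟨t, htF, ht1⟩ := (hev.and (Filter.eventually_ge_atTop 1)).exists
  have ht0 : (0 : ℝ) < t := lt_of_lt_of_le one_pos ht1
  refine ⟨t, ht0, t⁻¹ • (ω - x), interior_subset htF, ?_⟩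
  rw [smul_smul, mul_inv_cancel₀ ht0.ne', one_smul]
  simpa using hω

lemma minTime_nonneg (F Ω : Set X) (x : X) : 0 ≤ minTime F Ω x :=
  Real.sInf_nonneg (fun _ ht => ht.1.le)

lemma minTime_le_of_mem {F Ω : Set X} {x : X} {t : ℝ} (ht : t ∈ timeSet F Ω x) :
    minTime F Ω x ≤ t :=
  csInf_le (timeSet_bddBelow F Ω x) ht

lemma minTime_eq_zero_of_mem {F Ω : Set X} (h0 : (0 : X) ∈ F) {x : X} (hx : x ∈ Ω) :
    minTime F Ω x = 0 := by
  refine le_antisymm ?_ (minTime_nonneg F Ω x)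
  have h : ∀ ε : ℝ, 0 < ε → minTime F Ω x ≤ 0 + ε := by
    intro ε hε
    rw [zero_add]
    exact minTime_le_of_mem ⟨hε, 0, h0, by simpa using hx⟩
  exact le_of_forall_pos_le_add h

/-- Moving backwards along a direction `f ∈ F` for time `1` increases the minimal time
by at most `1`. -/
lemma minTime_sub_le {F Ω : Set X} (hconv : Convex ℝ F) (h0 : (0 : X) ∈ interior F)
    (hΩne : Ω.Nonempty) {f : X} (hf : f ∈ F) (x : X) :
    minTime F Ω (x - f) ≤ 1 + minTime F Ω x := by
  have hne := timeSet_nonempty h0 hΩne x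
  have key : ∀ s ∈ timeSet F Ω x, minTime F Ω (x - f) ≤ 1 + s := by
    rintro s ⟨hs0, f', hf', hsf'⟩
    have hs1 : (0 : ℝ) < 1 + s := by linarith
    set g : X := ((1 : ℝ) / (1 + s)) • f + (s / (1 + s)) • f' with hg
    have hgF : g ∈ F := by
      refine hconv hf hf' (by positivity) (by positivity) ?_
      field_simp
    refine minTime_le_of_mem ⟨hs1, g, hgF, ?_⟩
    have h1 : (1 + s) • g = f + s • f' := by
      rw [hg, smul_add, smul_smul, smul_smul]
      rw [mul_one_div, div_self hs1.ne', mul_div_assoc', mul_comm, mul_div_assoc,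
        div_self hs1.ne', mul_one, one_smul]
    rw [h1]
    have : x - f + (f + s • f') = x + s • f' := by abel
    rw [this]
    exact hsf'
  have h2 : minTime F Ω (x - f) - 1 ≤ minTime F Ω x :=
    le_csInf hne fun s hs => by linarith [key s hs]
  linarith

/-- Subdifferential of the minimal time function outside the F-closure of the target:
∂T_Ω^F(x̄) = N(x̄; Ω_r) ∩ S*, where r = T_Ω^F(x̄), Ω_r is the r-expansion of Ω,
and S* = {x* | σ_F(−x*) = 1}. -/
theorem subdiff_minTime_outside (F Ω : Set X) (hconv : Convex ℝ F)
    (h0 : (0 : X) ∈ interior F) (hΩne : Ω.Nonempty) (hΩ : Convex ℝ Ω) (x₀ : X)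
    (hx₀ : x₀ ∉ {y : X | ∀ ε : ℝ, 0 < ε → ∃ ω ∈ Ω, ∃ f ∈ F, y = ω - ε • f})
    (hr : 0 < minTime F Ω x₀) :
    subdiffMinTime F Ω x₀ =
      normalCone {x : X | minTime F Ω x ≤ minTime F Ω x₀} x₀ ∩
        {p : X →L[ℝ] ℝ | (⨆ f ∈ F, (↑(-(p f)) : EReal)) = 1} := by
  have h0F : (0 : X) ∈ F := interior_subset h0
  set r := minTime F Ω x₀ with hrdef
  ext p
  constructor
  · intro hp
    refine ⟨fun x hx => ?_, ?_⟩
    · have := hp x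
      simp only [Set.mem_setOf_eq] at hx
      linarith
    · -- the support condition
      have hub : ∀ f ∈ F, -p f ≤ 1 := by
        intro f hf
        have h1 := hp (x₀ - f)
        have h2 : minTime F Ω (x₀ - f) ≤ 1 + r := minTime_sub_le hconv h0 hΩne hf x₀
        have h3 : p (x₀ - f - x₀) = -p f := by
          have : x₀ - f - x₀ = -f := by abel
          rw [this, map_neg]
        rw [h3] at h1
        linarith
      have hlb : ∀ a : ℝ, a < 1 → ∃ f ∈ F, a < -p f := by
        intro a ha
        rcases le_or_gt a 0 with ha0 | ha0
        · obtain ⟨t, ht0, f, hf, htf⟩ := timeSet_nonempty h0 hΩne x₀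
          refine ⟨f, hf, ?_⟩
          have h1 := hp (x₀ + t • f)
          have h2 : minTime F Ω (x₀ + t • f) = 0 := minTime_eq_zero_of_mem h0F htf
          have h3 : p (x₀ + t • f - x₀) = t * p f := by
            have : x₀ + t • f - x₀ = t • f := by abel
            rw [this, map_smul]; rfl
          rw [h3, h2] at h1
          nlinarith
        · have hra : r < r / a := by
            rw [lt_div_iff₀ ha0]
            nlinarith
          obtain ⟨t, ht, hta⟩ := exists_lt_of_csInf_lt (timeSet_nonempty h0 hΩne x₀) hra
          obtain ⟨ht0, f, hf, htf⟩ := ht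
          refine ⟨f, hf, ?_⟩
          have h1 := hp (x₀ + t • f)
          have h2 : minTime F Ω (x₀ + t • f) = 0 := minTime_eq_zero_of_mem h0F htf
          have h3 : p (x₀ + t • f - x₀) = t * p f := by
            have : x₀ + t • f - x₀ = t • f := by abel
            rw [this, map_smul]; rfl
          rw [h3, h2] at h1
          -- t * p f ≤ -r, and t < r / a with a > 0, so a < r / t ≤ -p f
          have h4 : a * t < r := by
            rw [← lt_div_iff₀' ha0]; exact hta
          nlinarith
      refine le_antisymm ?_ ?_
      · refine iSup₂_le fun f hf => ?_
        have := hub f hf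
        exact_mod_cast this
      · refine le_of_forall_lt fun c hc => ?_
        induction c using EReal.rec with
        | bot =>
          obtain ⟨f, hf, hpf⟩ := hlb 0 one_pos
          calc (⊥ : EReal) < ((-p f : ℝ) : EReal) := by
                exact_mod_cast EReal.bot_lt_coe _
            _ ≤ ⨆ f ∈ F, (↑(-(p f)) : EReal) := le_iSup₂_of_le f hf le_rfl
        | coe a =>
          have ha : a < 1 := by exact_mod_cast hc
          obtain ⟨f, hf, hpf⟩ := hlb a ha
          calc ((a : ℝ) : EReal) < ((-p f : ℝ) : EReal) := by exact_mod_cast hpf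
            _ ≤ ⨆ f ∈ F, (↑(-(p f)) : EReal) := le_iSup₂_of_le f hf le_rfl
        | top => exact absurd hc (by simp)
  · rintro ⟨hN, hS⟩
    simp only [Set.mem_setOf_eq] at hS hN
    have hub : ∀ f ∈ F, -p f ≤ 1 := by
      intro f hf
      have h1 : (↑(-(p f)) : EReal) ≤ ⨆ f ∈ F, (↑(-(p f)) : EReal) :=
        le_iSup₂_of_le f hf le_rfl
      rw [hS] at h1
      exact_mod_cast h1
    have hlb : ∀ a : ℝ, a < 1 → ∃ f ∈ F, a < -p f := by
      intro a ha
      have h1 : ((a : ℝ) : EReal) < ⨆ f ∈ F, (↑(-(p f)) : EReal) := by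
        rw [hS]; exact_mod_cast ha
      simp only [lt_iSup_iff] at h1
      obtain ⟨f, hf, hpf⟩ := h1
      exact ⟨f, hf, by exact_mod_cast hpf⟩
    intro x
    have key : ∀ t ∈ timeSet F Ω x, p (x - x₀) ≤ t - r := by
      rintro t ⟨ht0, f, hf, htf⟩
      rcases le_or_gt r t with hrt | hrt
      · -- case r ≤ t
        set u : X := x + (t - r) • f with hu
        have hTu : minTime F Ω u ≤ r := by
          refine minTime_le_of_mem ⟨hr, f, hf, ?_⟩
          rw [hu, add_assoc, ← add_smul, sub_add_cancel]
          exact htf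
        have hNu := hN u hTu
        have h1 : p (u - x₀) = p (x - x₀) + (t - r) * p f := by
          rw [hu]
          have : x + (t - r) • f - x₀ = (x - x₀) + (t - r) • f := by abel
          rw [this, map_add, map_smul]; rfl
        rw [h1] at hNu
        have h2 := hub f hf
        nlinarith
      · -- case t < r
        refine le_of_forall_pos_le_add fun ε hε => ?_
        have hrt0 : (0 : ℝ) < r - t := by linarith
        obtain ⟨g, hg, hag⟩ := hlb (1 - ε / (r - t)) (by
          have h : 0 < ε / (r - t) := by positivity
          linarith)
        set z : X := x - (r - t) • g with hz
        set h : X := ((r - t) / r) • g + (t / r) • f with hh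
        have hhF : h ∈ F := by
          refine hconv hg hf (by positivity) (by positivity) ?_
          field_simp
          ring
        have hTz : minTime F Ω z ≤ r := by
          refine minTime_le_of_mem ⟨hr, h, hhF, ?_⟩
          have h1 : r • h = (r - t) • g + t • f := by
            rw [hh, smul_add, smul_smul, smul_smul, mul_div_assoc', mul_comm,
              mul_div_assoc, div_self hr.ne', mul_one, mul_div_assoc', mul_comm,
              mul_div_assoc, div_self hr.ne', mul_one]
          rw [hz, h1]
          have : x - (r - t) • g + ((r - t) • g + t • f) = x + t • f := by abel
          rw [this]
          exact htf
        have hNz := hN z hTz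
        have h1 : p (z - x₀) = p (x - x₀) - (r - t) * p g := by
          rw [hz]
          have : x - (r - t) • g - x₀ = (x - x₀) - (r - t) • g := by abel
          rw [this, map_sub, map_smul]; rfl
        rw [h1] at hNz
        -- p (x - x₀) ≤ (r - t) * p g, and p g < -(1 - ε/(r-t))
        have h2 : p g < ε / (r - t) - 1 := by linarith
        have h3 : (r - t) * (ε / (r - t)) = ε := by field_simp
        nlinarith
    have hne := timeSet_nonempty h0 hΩne x
    have h1 : p (x - x₀) + r ≤ minTime F Ω x :=
      le_csInf hne fun t ht => by linarith [key t ht]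
    linarith
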